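/- For every $\lambda\ge 0$ and every $(x,y,z)\in\mathbb{R}^3$, the symmetric matrix $M_\lambda(x,y,z)=\begin{pmatrix} x^2+(\lambda+1)z^2 & -xy & -xz\\ -xy & y^2+(\lambda+1)x^2 & -yz\\ -xz & -yz & z^2+(\lambda+1)y^2\end{pmatrix}$ is positive semi-definite. -/

import Mathlib

lemma choi_key (x y z a b c : ℝ) :
    0 ≤ (x^2+z^2)*a^2 + (y^2+x^2)*b^2 + (z^2+y^2)*c^2
        - 2*(x*y)*(a*b) - 2*(x*z)*(a*c) - 2*(y*z)*(b*c) := by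
  have hE : 0 ≤ (x^3*y - x*y*z^2)^2 + (x*y^2*z - x*z^3)^2 + (x^2*z^2 - y^2*z^2)^2 := by positivity
  have hD : 0 ≤ (x^4 + y^2*z^2 + x^2*z^2)*b^2 + (x^2*y^2 + z^4 + y^2*z^2)*c^2
      - 2*y*z*(2*x^2+z^2)*b*c := by
    rcases eq_or_ne x 0 with hx | hx
    · subst hx
      nlinarith [sq_nonneg (y*z*b - z^2*c), sq_nonneg (y*z*c)]
    · have hA1 : 0 < x^4 + y^2*z^2 + x^2*z^2 := by positivity
      nlinarith [sq_nonneg ((x^4 + y^2*z^2 + x^2*z^2)*b - y*z*(2*x^2+z^2)*c),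
        mul_nonneg hE (sq_nonneg c), hA1]
  rcases eq_or_ne (x^2 + z^2) 0 with hA | hA
  · have hx : x = 0 := by nlinarith [sq_nonneg x, sq_nonneg z]
    have hz : z = 0 := by nlinarith [sq_nonneg x, sq_nonneg z]
    subst hx; subst hz
    nlinarith [sq_nonneg (y*b), sq_nonneg (y*c)]
  · have hApos : 0 < x^2 + z^2 := lt_of_le_of_ne (by positivity) (Ne.symm hA)
    nlinarith [sq_nonneg ((x^2+z^2)*a - (x*y*b + x*z*c)), hD, hApos]

theorem stmt_5 (lam : ℝ) (hlam : 0 ≤ lam) (x y z : ℝ) :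
    (!![x^2 + (lam+1)*z^2, -(x*y), -(x*z);
        -(x*y), y^2 + (lam+1)*x^2, -(y*z);
        -(x*z), -(y*z), z^2 + (lam+1)*y^2] : Matrix (Fin 3) (Fin 3) ℝ).PosSemidef := by
  rw [Matrix.posSemidef_iff_dotProduct_mulVec]
  constructor
  · ext i j
    fin_cases i <;> fin_cases j <;>
      simp [Matrix.conjTranspose, Matrix.transpose, mul_comm]
  · intro v
    simp only [dotProduct, Matrix.mulVec, Fin.sum_univ_three, RCLike.re_to_real,
      star_trivial]
    simp [Matrix.cons_val_zero, Matrix.cons_val_one, Matrix.head_cons]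
    nlinarith [choi_key x y z (v 0) (v 1) (v 2),
      mul_nonneg hlam (sq_nonneg (z * v 0)),
      mul_nonneg hlam (sq_nonneg (x * v 1)),
      mul_nonneg hlam (sq_nonneg (y * v 2))]
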